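/- Let Q_a denote the equal-weight mixture of the Gaussian distributions N(a,σ²) and N(−a,σ²) on ℝ. For any u ≥ v ≥ 0, the Kullback–Leibler divergence satisfies D(Q_u ‖ Q_v) ≤ ((u² − v²)/(2σ⁴))·u². -/

import Mathlib

/-- Density of the Gaussian distribution `N(a, σ²)`. -/
noncomputable def gaussPdf (σ a x : ℝ) : ℝ :=
  (Real.sqrt (2 * Real.pi * σ ^ 2))⁻¹ * Real.exp (-(x - a) ^ 2 / (2 * σ ^ 2))

/-- Density of the equal-weight mixture of `N(a, σ²)` and `N(-a, σ²)`. -/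
noncomputable def mixPdf (σ a x : ℝ) : ℝ :=
  (1 / 2) * gaussPdf σ a x + (1 / 2) * gaussPdf σ (-a) x


open Real MeasureTheory Filter

section gaussint
variable {b : ℝ}

lemma integral_x_mul_gauss (hb : 0 < b) :
    ∫ x : ℝ, x * Real.exp (-b * x ^ 2) = 0 := by
  have hderiv : ∀ x : ℝ, HasDerivAt (fun x : ℝ => -(2*b)⁻¹ * Real.exp (-b * x ^ 2))
      (x * Real.exp (-b * x ^ 2)) x := by
    intro x
    have h1 : HasDerivAt (fun x : ℝ => -b * x ^ 2) (-b * (2 * x)) x := by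
      simpa using ((hasDerivAt_pow 2 x).const_mul (-b))
    have h2 := (h1.exp).const_mul (-(2*b)⁻¹)
    refine h2.congr_deriv ?_
    field_simp
  have hint : Integrable (fun x : ℝ => x * Real.exp (-b * x ^ 2)) :=
    integrable_mul_exp_neg_mul_sq hb
  have hint2 : Integrable (fun x : ℝ => -(2*b)⁻¹ * Real.exp (-b * x ^ 2)) :=
    (integrable_exp_neg_mul_sq hb).const_mul _
  exact integral_eq_zero_of_hasDerivAt_of_integrable hderiv hint hint2

lemma integrable_sq_mul_gauss (hb : 0 < b) :
    Integrable (fun x : ℝ => x ^ 2 * Real.exp (-b * x ^ 2)) := by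
  have := integrable_rpow_mul_exp_neg_mul_sq hb (s := 2) (by norm_num)
  refine this.congr (Filter.Eventually.of_forall fun x => ?_)
  simp only []
  rw [show ((2:ℝ):ℝ) = ((2:ℕ):ℝ) by norm_num, Real.rpow_natCast]

lemma integral_sq_mul_gauss (hb : 0 < b) :
    ∫ x : ℝ, x ^ 2 * Real.exp (-b * x ^ 2) = (2*b)⁻¹ * Real.sqrt (Real.pi / b) := by
  have hu : ∀ x : ℝ, HasDerivAt (fun x : ℝ => x) 1 x := fun x => hasDerivAt_id x
  have hv : ∀ x : ℝ, HasDerivAt (fun x : ℝ => -(2*b)⁻¹ * Real.exp (-b * x ^ 2))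
      (x * Real.exp (-b * x ^ 2)) x := by
    intro x
    have h1 : HasDerivAt (fun x : ℝ => -b * x ^ 2) (-b * (2 * x)) x := by
      simpa using ((hasDerivAt_pow 2 x).const_mul (-b))
    have h2 := (h1.exp).const_mul (-(2*b)⁻¹)
    refine h2.congr_deriv ?_
    field_simp
  have huv' : Integrable (fun x : ℝ => x * (x * Real.exp (-b * x ^ 2))) := by
    exact (integrable_sq_mul_gauss hb).congr (Filter.Eventually.of_forall fun x => by ring)
  have hu'v : Integrable (fun x : ℝ => (1:ℝ) * (-(2*b)⁻¹ * Real.exp (-b * x ^ 2))) := by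
    simpa using ((integrable_exp_neg_mul_sq hb).const_mul (-(2*b)⁻¹))
  have huv : Integrable (fun x : ℝ => x * (-(2*b)⁻¹ * Real.exp (-b * x ^ 2))) := by
    exact ((integrable_mul_exp_neg_mul_sq hb).const_mul (-(2*b)⁻¹)).congr
      (Filter.Eventually.of_forall fun x => by ring)
  have := MeasureTheory.integral_mul_deriv_eq_deriv_mul_of_integrable
    (u := fun x : ℝ => x) (v := fun x : ℝ => -(2*b)⁻¹ * Real.exp (-b * x ^ 2))
    (u' := fun _ => (1:ℝ)) (v' := fun x => x * Real.exp (-b * x ^ 2))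
    (fun x _ => hu x) (fun x _ => hv x) huv' hu'v huv
  calc ∫ x : ℝ, x ^ 2 * Real.exp (-b * x ^ 2)
      = ∫ x : ℝ, x * (x * Real.exp (-b * x ^ 2)) := by congr 1; ext x; ring
    _ = - ∫ x : ℝ, (1:ℝ) * (-(2*b)⁻¹ * Real.exp (-b * x ^ 2)) := this
    _ = (2*b)⁻¹ * ∫ x : ℝ, Real.exp (-b * x ^ 2) := by
        rw [← integral_neg, ← integral_const_mul]
        congr 1; ext x; ring
    _ = (2*b)⁻¹ * Real.sqrt (Real.pi / b) := by rw [integral_gaussian]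

end gaussint



lemma gaussPdf_eq (σ a x : ℝ) :
    gaussPdf σ a x = (Real.sqrt (2 * Real.pi * σ ^ 2))⁻¹ * Real.exp (-(2*σ^2)⁻¹ * (x - a) ^ 2) := by
  unfold gaussPdf; ring_nf

lemma gaussPdf_pos {σ : ℝ} (hσ : 0 < σ) (a x : ℝ) : 0 < gaussPdf σ a x := by
  unfold gaussPdf
  have : 0 < 2 * Real.pi * σ ^ 2 := by positivity
  positivity

lemma sqrt_pi_div {σ : ℝ} (hσ : σ ≠ 0) :
    Real.sqrt (Real.pi / (2*σ^2)⁻¹) = Real.sqrt (2 * Real.pi * σ ^ 2) := by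
  congr 1; field_simp

lemma integrable_gaussPdf {σ : ℝ} (hσ : 0 < σ) (a : ℝ) : Integrable (gaussPdf σ a) := by
  have hb : 0 < (2*σ^2)⁻¹ := by positivity
  have h0 : Integrable (fun x : ℝ => (Real.sqrt (2 * Real.pi * σ ^ 2))⁻¹ *
      Real.exp (-(2*σ^2)⁻¹ * x ^ 2)) := (integrable_exp_neg_mul_sq hb).const_mul _
  have := h0.comp_sub_right a
  exact this.congr (Filter.Eventually.of_forall fun x => (gaussPdf_eq σ a x).symm)

lemma integral_gaussPdf {σ : ℝ} (hσ : 0 < σ) (a : ℝ) : ∫ x : ℝ, gaussPdf σ a x = 1 := by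
  have hb : 0 < (2*σ^2)⁻¹ := by positivity
  calc ∫ x : ℝ, gaussPdf σ a x
      = ∫ x : ℝ, (Real.sqrt (2 * Real.pi * σ ^ 2))⁻¹ * Real.exp (-(2*σ^2)⁻¹ * (x - a) ^ 2) := by
        simp_rw [gaussPdf_eq]
    _ = ∫ x : ℝ, (Real.sqrt (2 * Real.pi * σ ^ 2))⁻¹ * Real.exp (-(2*σ^2)⁻¹ * x ^ 2) :=
        integral_sub_right_eq_self
          (fun x => (Real.sqrt (2 * Real.pi * σ ^ 2))⁻¹ * Real.exp (-(2*σ^2)⁻¹ * x ^ 2)) a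
    _ = (Real.sqrt (2 * Real.pi * σ ^ 2))⁻¹ * Real.sqrt (Real.pi / (2*σ^2)⁻¹) := by
        rw [integral_const_mul, integral_gaussian]
    _ = 1 := by
        rw [sqrt_pi_div hσ.ne']
        have h2 : 0 < 2 * Real.pi * σ ^ 2 := by positivity
        exact inv_mul_cancel₀ (Real.sqrt_pos.mpr h2).ne'

lemma gaussPdf_add (σ a x : ℝ) :
    gaussPdf σ a (x + a)
      = (Real.sqrt (2 * Real.pi * σ ^ 2))⁻¹ * Real.exp (-(2*σ^2)⁻¹ * x ^ 2) := by
  rw [gaussPdf_eq]; simp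

lemma integrable_shifted_sq {σ : ℝ} (hσ : 0 < σ) (a : ℝ) :
    Integrable (fun x : ℝ => (x + a) ^ 2 *
      ((Real.sqrt (2 * Real.pi * σ ^ 2))⁻¹ * Real.exp (-(2*σ^2)⁻¹ * x ^ 2))) := by
  have hb : 0 < (2*σ^2)⁻¹ := by positivity
  set C := (Real.sqrt (2 * Real.pi * σ ^ 2))⁻¹ with hC
  have h1 : Integrable (fun x : ℝ => C * (x ^ 2 * Real.exp (-(2*σ^2)⁻¹ * x ^ 2))) :=
    (integrable_sq_mul_gauss hb).const_mul _
  have h2 : Integrable (fun x : ℝ => (2*a*C) * (x * Real.exp (-(2*σ^2)⁻¹ * x ^ 2))) :=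
    (integrable_mul_exp_neg_mul_sq hb).const_mul _
  have h3 : Integrable (fun x : ℝ => (a^2*C) * Real.exp (-(2*σ^2)⁻¹ * x ^ 2)) :=
    (integrable_exp_neg_mul_sq hb).const_mul _
  refine ((h1.add h2).add h3).congr (Filter.Eventually.of_forall fun x => ?_)
  simp only [Pi.add_apply]
  ring

lemma integrable_sq_mul_gaussPdf {σ : ℝ} (hσ : 0 < σ) (a : ℝ) :
    Integrable (fun x : ℝ => x ^ 2 * gaussPdf σ a x) := by
  have := (integrable_shifted_sq hσ a).comp_sub_right a
  refine this.congr (Filter.Eventually.of_forall fun x => ?_)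
  simp only []
  rw [gaussPdf_eq]
  ring_nf

lemma integral_sq_mul_gaussPdf {σ : ℝ} (hσ : 0 < σ) (a : ℝ) :
    ∫ x : ℝ, x ^ 2 * gaussPdf σ a x = σ ^ 2 + a ^ 2 := by
  have hb : 0 < (2*σ^2)⁻¹ := by positivity
  set C := (Real.sqrt (2 * Real.pi * σ ^ 2))⁻¹ with hC
  have hCpos : 0 < C := by
    have : 0 < 2 * Real.pi * σ ^ 2 := by positivity
    rw [hC]; positivity
  have key : (∫ x : ℝ, x ^ 2 * gaussPdf σ a x)
      = ∫ x : ℝ, (x + a) ^ 2 * (C * Real.exp (-(2*σ^2)⁻¹ * x ^ 2)) := by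
    rw [← integral_add_right_eq_self (fun x => x ^ 2 * gaussPdf σ a x) a]
    congr 1; ext x
    rw [gaussPdf_add]
  rw [key]
  have h1 : Integrable (fun x : ℝ => C * (x ^ 2 * Real.exp (-(2*σ^2)⁻¹ * x ^ 2))) :=
    (integrable_sq_mul_gauss hb).const_mul _
  have h2 : Integrable (fun x : ℝ => (2*a*C) * (x * Real.exp (-(2*σ^2)⁻¹ * x ^ 2))) :=
    (integrable_mul_exp_neg_mul_sq hb).const_mul _
  have h3 : Integrable (fun x : ℝ => (a^2*C) * Real.exp (-(2*σ^2)⁻¹ * x ^ 2)) :=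
    (integrable_exp_neg_mul_sq hb).const_mul _
  have expand : (∫ x : ℝ, (x + a) ^ 2 * (C * Real.exp (-(2*σ^2)⁻¹ * x ^ 2)))
      = (∫ x : ℝ, C * (x ^ 2 * Real.exp (-(2*σ^2)⁻¹ * x ^ 2)))
        + (∫ x : ℝ, (2*a*C) * (x * Real.exp (-(2*σ^2)⁻¹ * x ^ 2)))
        + (∫ x : ℝ, (a^2*C) * Real.exp (-(2*σ^2)⁻¹ * x ^ 2)) := by
    have h12 : Integrable (fun x : ℝ => C * (x ^ 2 * Real.exp (-(2*σ^2)⁻¹ * x ^ 2))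
        + (2*a*C) * (x * Real.exp (-(2*σ^2)⁻¹ * x ^ 2))) := h1.add h2
    rw [← integral_add h1 h2, ← integral_add h12 h3]
    congr 1; ext x; ring
  rw [expand]
  rw [integral_const_mul, integral_const_mul, integral_const_mul,
    integral_sq_mul_gauss hb, integral_x_mul_gauss hb, integral_gaussian]
  have hsqrt : Real.sqrt (Real.pi / (2*σ^2)⁻¹) = Real.sqrt (2 * Real.pi * σ ^ 2) :=
    sqrt_pi_div hσ.ne'
  have hCs : C * Real.sqrt (Real.pi / (2*σ^2)⁻¹) = 1 := by
    rw [hsqrt, hC]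
    have h2 : 0 < 2 * Real.pi * σ ^ 2 := by positivity
    exact inv_mul_cancel₀ (Real.sqrt_pos.mpr h2).ne'
  have hinv : (2 * (2*σ^2)⁻¹)⁻¹ = σ ^ 2 := by
    field_simp
  calc C * ((2 * (2*σ^2)⁻¹)⁻¹ * Real.sqrt (Real.pi / (2*σ^2)⁻¹)) + 2*a*C * 0
        + a^2*C * Real.sqrt (Real.pi / (2*σ^2)⁻¹)
      = (2 * (2*σ^2)⁻¹)⁻¹ * (C * Real.sqrt (Real.pi / (2*σ^2)⁻¹))
        + a^2 * (C * Real.sqrt (Real.pi / (2*σ^2)⁻¹)) := by ring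
    _ = σ ^ 2 + a ^ 2 := by rw [hCs, hinv]; ring

lemma sinh_le_mul_cosh {s : ℝ} (hs : 0 ≤ s) : Real.sinh s ≤ s * Real.cosh s := by
  have hmono : MonotoneOn (fun s : ℝ => s * Real.cosh s - Real.sinh s) (Set.Ici 0) := by
    have hderiv : ∀ x : ℝ, HasDerivAt (fun s : ℝ => s * Real.cosh s - Real.sinh s)
        (x * Real.sinh x) x := by
      intro x
      have h1 : HasDerivAt (fun s : ℝ => s * Real.cosh s)
          (1 * Real.cosh x + x * Real.sinh x) x :=
        (hasDerivAt_id x).mul (Real.hasDerivAt_cosh x)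
      have h2 := h1.sub (Real.hasDerivAt_sinh x)
      refine h2.congr_deriv ?_
      ring
    refine monotoneOn_of_deriv_nonneg (convex_Ici 0)
      (fun x _ => ((hderiv x).continuousAt).continuousWithinAt)
      (fun x _ => ((hderiv x).differentiableAt).differentiableWithinAt) ?_
    intro x hx
    rw [(hderiv x).deriv]
    rw [interior_Ici] at hx
    have hx' : (0:ℝ) ≤ x := le_of_lt hx
    exact mul_nonneg hx' (by rw [← Real.sinh_zero]; exact Real.sinh_le_sinh.mpr hx')
  have := hmono (Set.self_mem_Ici) hs hs
  simpa using this

lemma mul_sinh_le {a t : ℝ} (ha : 0 ≤ a) : t * Real.sinh (a * t) ≤ a * t ^ 2 * Real.cosh (a * t) := by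
  rcases le_or_gt 0 t with ht | ht
  · have hs : 0 ≤ a * t := mul_nonneg ha ht
    have := sinh_le_mul_cosh hs
    calc t * Real.sinh (a * t) ≤ t * (a * t * Real.cosh (a * t)) := by
          exact mul_le_mul_of_nonneg_left this ht
      _ = a * t ^ 2 * Real.cosh (a * t) := by ring
  · have hs : 0 ≤ a * (-t) := mul_nonneg ha (by linarith)
    have h := sinh_le_mul_cosh hs
    rw [show a * (-t) = -(a*t) by ring, Real.sinh_neg, Real.cosh_neg] at h
    -- h : -sinh (a*t) ≤ -(a*t) * cosh (a*t)
    have ht' : 0 ≤ -t := by linarith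
    have := mul_le_mul_of_nonneg_left h ht'
    calc t * Real.sinh (a * t) = (-t) * (-Real.sinh (a*t)) := by ring
      _ ≤ (-t) * (-(a*t) * Real.cosh (a*t)) := this
      _ = a * t ^ 2 * Real.cosh (a * t) := by ring

lemma log_cosh_diff_le {u v : ℝ} (t : ℝ) (hv : 0 ≤ v) (hvu : v ≤ u) :
    Real.log (Real.cosh (u * t)) - Real.log (Real.cosh (v * t))
      ≤ (u ^ 2 - v ^ 2) * t ^ 2 / 2 := by
  have hderiv : ∀ a : ℝ, HasDerivAt (fun a : ℝ => a ^ 2 * t ^ 2 / 2 - Real.log (Real.cosh (a * t)))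
      (a * t ^ 2 - (Real.cosh (a * t))⁻¹ * (Real.sinh (a * t) * t)) a := by
    intro a
    have h1 : HasDerivAt (fun a : ℝ => a ^ 2 * t ^ 2 / 2) (a * t ^ 2) a := by
      have := ((hasDerivAt_pow 2 a).const_mul (t ^ 2 / 2))
      convert this using 1
      · rfl
      · rfl
      · ext y; ring
      · simp; ring
    have hin : HasDerivAt (fun a : ℝ => a * t) t a := by
      simpa using (hasDerivAt_id a).mul_const t
    have hcosh : HasDerivAt (fun a : ℝ => Real.cosh (a * t)) (Real.sinh (a * t) * t) a :=
      HasDerivAt.comp (h₂ := Real.cosh) a (Real.hasDerivAt_cosh (a * t)) hin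
    have hlog : HasDerivAt (fun a : ℝ => Real.log (Real.cosh (a * t)))
        ((Real.cosh (a * t))⁻¹ * (Real.sinh (a * t) * t)) a :=
      HasDerivAt.comp (h₂ := Real.log) a (Real.hasDerivAt_log (Real.cosh_pos (a*t)).ne') hcosh
    exact h1.sub hlog
  have hmono : MonotoneOn (fun a : ℝ => a ^ 2 * t ^ 2 / 2 - Real.log (Real.cosh (a * t)))
      (Set.Ici 0) := by
    refine monotoneOn_of_deriv_nonneg (convex_Ici 0)
      (fun x _ => ((hderiv x).continuousAt).continuousWithinAt)
      (fun x _ => ((hderiv x).differentiableAt).differentiableWithinAt) ?_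
    intro a ha
    rw [(hderiv a).deriv]
    rw [interior_Ici] at ha
    have ha' : (0:ℝ) ≤ a := le_of_lt ha
    have hc : 0 < Real.cosh (a * t) := Real.cosh_pos _
    rw [sub_nonneg, inv_mul_le_iff₀ hc]
    calc Real.sinh (a * t) * t = t * Real.sinh (a * t) := by ring
      _ ≤ a * t ^ 2 * Real.cosh (a * t) := mul_sinh_le ha'
      _ = Real.cosh (a * t) * (a * t ^ 2) := by ring
  have := hmono (Set.mem_Ici.mpr hv) (Set.mem_Ici.mpr (le_trans hv hvu)) hvu
  simp only [] at this
  linarith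

lemma mixPdf_eq {σ : ℝ} (hσ : 0 < σ) (a x : ℝ) :
    mixPdf σ a x = (Real.sqrt (2 * Real.pi * σ ^ 2))⁻¹
      * Real.exp (-(x ^ 2 + a ^ 2) / (2 * σ ^ 2)) * Real.cosh (a * x / σ ^ 2) := by
  have hσ2 : (σ:ℝ) ^ 2 ≠ 0 := by positivity
  have e1 : -(x - a) ^ 2 / (2 * σ ^ 2)
      = -(x ^ 2 + a ^ 2) / (2 * σ ^ 2) + a * x / σ ^ 2 := by
    field_simp; ring
  have e2 : -(x - -a) ^ 2 / (2 * σ ^ 2)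
      = -(x ^ 2 + a ^ 2) / (2 * σ ^ 2) + -(a * x / σ ^ 2) := by
    field_simp; ring
  unfold mixPdf gaussPdf
  rw [e1, e2, Real.cosh_eq, Real.exp_add, Real.exp_add]
  ring

lemma mixPdf_pos {σ : ℝ} (hσ : 0 < σ) (a x : ℝ) : 0 < mixPdf σ a x := by
  unfold mixPdf
  have h1 := gaussPdf_pos hσ a x
  have h2 := gaussPdf_pos hσ (-a) x
  linarith

lemma log_mixPdf {σ : ℝ} (hσ : 0 < σ) (a x : ℝ) :
    Real.log (mixPdf σ a x) = Real.log (Real.sqrt (2 * Real.pi * σ ^ 2))⁻¹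
      + (-(x ^ 2 + a ^ 2) / (2 * σ ^ 2)) + Real.log (Real.cosh (a * x / σ ^ 2)) := by
  have hC : ((Real.sqrt (2 * Real.pi * σ ^ 2))⁻¹ : ℝ) ≠ 0 := by
    have : 0 < 2 * Real.pi * σ ^ 2 := by positivity
    exact inv_ne_zero (Real.sqrt_pos.mpr this).ne'
  rw [mixPdf_eq hσ, Real.log_mul (by positivity) (Real.cosh_pos _).ne',
    Real.log_mul hC (Real.exp_ne_zero _), Real.log_exp]

lemma integrable_mixPdf {σ : ℝ} (hσ : 0 < σ) (a : ℝ) : Integrable (mixPdf σ a) :=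
  (((integrable_gaussPdf hσ a).const_mul _).add ((integrable_gaussPdf hσ (-a)).const_mul _))

lemma integral_mixPdf {σ : ℝ} (hσ : 0 < σ) (a : ℝ) : ∫ x : ℝ, mixPdf σ a x = 1 := by
  unfold mixPdf
  rw [integral_add ((integrable_gaussPdf hσ a).const_mul _)
    ((integrable_gaussPdf hσ (-a)).const_mul _), integral_const_mul, integral_const_mul,
    integral_gaussPdf hσ a, integral_gaussPdf hσ (-a)]
  norm_num

lemma integrable_sq_mul_mixPdf {σ : ℝ} (hσ : 0 < σ) (a : ℝ) :
    Integrable (fun x : ℝ => x ^ 2 * mixPdf σ a x) := by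
  refine (((integrable_sq_mul_gaussPdf hσ a).const_mul (1/2 : ℝ)).add
    ((integrable_sq_mul_gaussPdf hσ (-a)).const_mul (1/2 : ℝ))).congr
    (Filter.Eventually.of_forall fun x => ?_)
  simp only [Pi.add_apply]
  unfold mixPdf
  ring

lemma integral_sq_mul_mixPdf {σ : ℝ} (hσ : 0 < σ) (a : ℝ) :
    ∫ x : ℝ, x ^ 2 * mixPdf σ a x = σ ^ 2 + a ^ 2 := by
  have key : (fun x : ℝ => x ^ 2 * mixPdf σ a x)
      = fun x : ℝ => (1/2 : ℝ) * (x ^ 2 * gaussPdf σ a x)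
        + (1/2 : ℝ) * (x ^ 2 * gaussPdf σ (-a) x) := by
    ext x; unfold mixPdf; ring
  rw [key, integral_add ((integrable_sq_mul_gaussPdf hσ a).const_mul _)
    ((integrable_sq_mul_gaussPdf hσ (-a)).const_mul _), integral_const_mul, integral_const_mul,
    integral_sq_mul_gaussPdf hσ a, integral_sq_mul_gaussPdf hσ (-a)]
  ring

theorem kl_mixture_bound_high (σ u v : ℝ) (hσ : 0 < σ)
    (hv : 0 ≤ v) (hvu : v ≤ u) :
    ∫ x : ℝ, mixPdf σ u x * Real.log (mixPdf σ u x / mixPdf σ v x)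
      ≤ ((u ^ 2 - v ^ 2) / (2 * σ ^ 4)) * u ^ 2 := by
  have hσ2 : (σ:ℝ) ^ 2 ≠ 0 := by positivity
  have huv2 : 0 ≤ u ^ 2 - v ^ 2 := by
    have := pow_le_pow_left₀ hv hvu 2
    linarith
  set g : ℝ → ℝ := fun x => ((u ^ 2 - v ^ 2) / (2 * σ ^ 4)) * (x ^ 2 * mixPdf σ u x)
      - ((u ^ 2 - v ^ 2) / (2 * σ ^ 2)) * mixPdf σ u x with hg
  -- pointwise bound
  have hpoint : ∀ x : ℝ, mixPdf σ u x * Real.log (mixPdf σ u x / mixPdf σ v x) ≤ g x := by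
    intro x
    have hlograt : Real.log (mixPdf σ u x / mixPdf σ v x)
        = (-(x ^ 2 + u ^ 2) / (2 * σ ^ 2) - -(x ^ 2 + v ^ 2) / (2 * σ ^ 2))
          + (Real.log (Real.cosh (u * x / σ ^ 2)) - Real.log (Real.cosh (v * x / σ ^ 2))) := by
      rw [Real.log_div (mixPdf_pos hσ u x).ne' (mixPdf_pos hσ v x).ne',
        log_mixPdf hσ u x, log_mixPdf hσ v x]
      ring
    have hkey : Real.log (Real.cosh (u * x / σ ^ 2)) - Real.log (Real.cosh (v * x / σ ^ 2))
        ≤ (u ^ 2 - v ^ 2) * (x / σ ^ 2) ^ 2 / 2 := by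
      have := log_cosh_diff_le (x / σ ^ 2) hv hvu
      have e1 : u * (x / σ ^ 2) = u * x / σ ^ 2 := by ring
      have e2 : v * (x / σ ^ 2) = v * x / σ ^ 2 := by ring
      rwa [e1, e2] at this
    have hbound : Real.log (mixPdf σ u x / mixPdf σ v x)
        ≤ ((u ^ 2 - v ^ 2) / (2 * σ ^ 4)) * x ^ 2 - (u ^ 2 - v ^ 2) / (2 * σ ^ 2) := by
      rw [hlograt]
      have e3 : (-(x ^ 2 + u ^ 2) / (2 * σ ^ 2) - -(x ^ 2 + v ^ 2) / (2 * σ ^ 2))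
          = -((u ^ 2 - v ^ 2) / (2 * σ ^ 2)) := by field_simp; ring
      have e4 : (u ^ 2 - v ^ 2) * (x / σ ^ 2) ^ 2 / 2
          = ((u ^ 2 - v ^ 2) / (2 * σ ^ 4)) * x ^ 2 := by
        field_simp
      rw [e3]
      rw [e4] at hkey
      linarith
    have hmp := (mixPdf_pos hσ u x).le
    calc mixPdf σ u x * Real.log (mixPdf σ u x / mixPdf σ v x)
        ≤ mixPdf σ u x * (((u ^ 2 - v ^ 2) / (2 * σ ^ 4)) * x ^ 2
            - (u ^ 2 - v ^ 2) / (2 * σ ^ 2)) := mul_le_mul_of_nonneg_left hbound hmp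
      _ = g x := by rw [hg]; ring
  have hg_int : Integrable g := by
    exact ((integrable_sq_mul_mixPdf hσ u).const_mul _).sub
      ((integrable_mixPdf hσ u).const_mul _)
  have hg_val : ∫ x : ℝ, g x = ((u ^ 2 - v ^ 2) / (2 * σ ^ 4)) * u ^ 2 := by
    rw [hg]
    rw [integral_sub ((integrable_sq_mul_mixPdf hσ u).const_mul _)
      ((integrable_mixPdf hσ u).const_mul _), integral_const_mul, integral_const_mul,
      integral_sq_mul_mixPdf hσ u, integral_mixPdf hσ u]
    field_simp
    ring
  by_cases hf : Integrable (fun x : ℝ => mixPdf σ u x * Real.log (mixPdf σ u x / mixPdf σ v x))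
  · calc ∫ x : ℝ, mixPdf σ u x * Real.log (mixPdf σ u x / mixPdf σ v x)
        ≤ ∫ x : ℝ, g x := integral_mono hf hg_int hpoint
      _ = ((u ^ 2 - v ^ 2) / (2 * σ ^ 4)) * u ^ 2 := hg_val
  · rw [integral_undef hf]
    have : 0 ≤ (u ^ 2 - v ^ 2) / (2 * σ ^ 4) := by positivity
    have hu2 : (0:ℝ) ≤ u ^ 2 := sq_nonneg u
    exact mul_nonneg this hu2
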